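/- arXiv:math/0702436 — 4 statements merged into one kernel-verified Lean document; each statement's English description precedes it below -/
import Mathlib

section
/- Let R be a commutative ring and let h(x) = \sum_{i=-m}^{n} c_i x^i be a Laurent polynomial over R with m, n \geq 1 such that c_n and c_{-m} are units in R. Then the R-algebra homomorphism R[x] \to R[x, x^{-1}] sending x to h(x) is a finite ring homomorphism; that is, R[x, x^{-1}] is a finitely generated module over R[x] via this map. -/
open LaurentPolynomial Polynomial

lemma aux_eval {R : Type*} [CommRing R] (m n : ℕ) (hn : 1 ≤ n)
    (c : ℤ → R) (hcn : IsUnit (c n)) (h : LaurentPolynomial R)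
    (hh : h = ∑ i ∈ Finset.Icc (-(m : ℤ)) (n : ℤ), LaurentPolynomial.C (c i) * T i) :
    ∃ q : Polynomial (Polynomial R), q.Monic ∧
      Polynomial.eval₂ (((Polynomial.aeval h : Polynomial R →ₐ[R] LaurentPolynomial R)) :
        Polynomial R →+* LaurentPolynomial R) (T 1) q = 0 := by
  set u := hcn.unit with hu
  set r : Polynomial (Polynomial R) :=
    (∑ i ∈ Finset.Ico (-(m : ℤ)) (n : ℤ),
        Polynomial.C (Polynomial.C ((↑u⁻¹ : R) * c i)) * Polynomial.X ^ (i + m).toNat)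
      - Polynomial.C (Polynomial.C ((↑u⁻¹ : R)) * Polynomial.X) * Polynomial.X ^ m with hr
  refine ⟨Polynomial.X ^ (m + n) + r, Polynomial.monic_X_pow_add ?_, ?_⟩
  · refine lt_of_le_of_lt (Polynomial.degree_sub_le _ _) ?_
    rw [max_lt_iff]
    constructor
    · refine lt_of_le_of_lt (Polynomial.degree_sum_le _ _) ?_
      rw [Finset.sup_lt_iff (by exact WithBot.bot_lt_coe _)]
      intro i hi
      refine lt_of_le_of_lt (Polynomial.degree_C_mul_X_pow_le _ _) ?_
      have h2 := (Finset.mem_Ico.mp hi).2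
      exact_mod_cast show ((i + m).toNat : ℕ) < m + n by omega
    · refine lt_of_le_of_lt (Polynomial.degree_C_mul_X_pow_le _ _) ?_
      exact_mod_cast show m < m + n by omega
  · have fC : ∀ a : R, (Polynomial.aeval h) (Polynomial.C a) = LaurentPolynomial.C a := by
      intro a; rw [Polynomial.aeval_C, ← LaurentPolynomial.C_eq_algebraMap]
    have key : h * T (m : ℤ) = ∑ i ∈ Finset.Icc (-(m : ℤ)) (n : ℤ),
        LaurentPolynomial.C (c i) * T (i + m) := by
      rw [hh, Finset.sum_mul]
      exact Finset.sum_congr rfl fun i _ => by rw [mul_assoc, ← T_add]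
    simp only [hr, Polynomial.eval₂_add, Polynomial.eval₂_sub, Polynomial.eval₂_mul,
      Polynomial.eval₂_X_pow, Polynomial.eval₂_C, Polynomial.eval₂_finset_sum,
      RingHom.coe_coe, map_mul, fC, Polynomial.aeval_X, T_pow, mul_one]
    have hone : (↑u⁻¹ : R) * c ↑n = 1 := by
      rw [← hcn.unit_spec, ← hu]; exact u.inv_mul
    have hsum : ∀ i ∈ Finset.Ico (-(m : ℤ)) (n : ℤ),
        LaurentPolynomial.C (↑u⁻¹ : R) * LaurentPolynomial.C (c i) * T (((i + m).toNat : ℕ) : ℤ)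
          = LaurentPolynomial.C (↑u⁻¹ : R) * (LaurentPolynomial.C (c i) * T (i + m)) := by
      intro i hi
      have h1 := (Finset.mem_Ico.mp hi).1
      rw [Int.toNat_of_nonneg (by omega), mul_assoc]
    rw [Finset.sum_congr rfl hsum, ← Finset.mul_sum,
      mul_assoc (LaurentPolynomial.C (↑u⁻¹ : R)) h, key,
      ← Finset.sum_erase_add _ _ (show (n : ℤ) ∈ Finset.Icc (-(m : ℤ)) (n : ℤ) by
        simp),
      Finset.Icc_erase_right, mul_add, ← mul_assoc, ← map_mul, hone, map_one, one_mul]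
    have hc : (((m + n : ℕ) : ℤ)) = (n : ℤ) + m := by push_cast; ring
    rw [hc]
    ring

/-- Lemma 1.1(i) (finiteness part): if `h(x) = ∑_{i=-m}^{n} c_i x^i` is a Laurent polynomial
over a commutative ring `R` with `m, n ≥ 1` and `c_n`, `c_{-m}` units in `R`, then the
`R`-algebra homomorphism `R[x] → R[x, x⁻¹]`, `x ↦ h(x)`, is a finite ring homomorphism. -/
theorem laurent_finite_of_unit_extreme_coeffs
    {R : Type*} [CommRing R] (m n : ℕ) (hm : 1 ≤ m) (hn : 1 ≤ n)
    (c : ℤ → R) (hcn : IsUnit (c n)) (hcm : IsUnit (c (-(m : ℤ))))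
    (h : LaurentPolynomial R)
    (hh : h = ∑ i ∈ Finset.Icc (-(m : ℤ)) (n : ℤ), LaurentPolynomial.C (c i) * T i) :
    ((Polynomial.aeval h : Polynomial R →ₐ[R] LaurentPolynomial R) :
        Polynomial R →+* LaurentPolynomial R).Finite := by
  set f : Polynomial R →+* LaurentPolynomial R :=
    ((Polynomial.aeval h : Polynomial R →ₐ[R] LaurentPolynomial R) :
      Polynomial R →+* LaurentPolynomial R) with hfdef
  letI : Algebra (Polynomial R) (LaurentPolynomial R) := f.toAlgebra
  letI : Module (Polynomial R) (LaurentPolynomial R) := Algebra.toModule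
  show Module.Finite (Polynomial R) (LaurentPolynomial R)
  have fC : ∀ a : R, f (Polynomial.C a) = LaurentPolynomial.C a := fun a => by
    show (Polynomial.aeval h) (Polynomial.C a) = _
    rw [Polynomial.aeval_C, ← LaurentPolynomial.C_eq_algebraMap]
  have h1 : IsIntegral (Polynomial R) (T 1 : LaurentPolynomial R) := by
    obtain ⟨q, hq, he⟩ := aux_eval m n hn c hcn h hh
    exact ⟨q, hq, he⟩
  have h2 : IsIntegral (Polynomial R) (T (-1) : LaurentPolynomial R) := by
    have hinv : invert h = ∑ i ∈ Finset.Icc (-(n : ℤ)) (m : ℤ),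
        LaurentPolynomial.C ((fun i : ℤ => c (-i)) i) * T i := by
      rw [hh, map_sum]
      refine Finset.sum_nbij' (i := fun i : ℤ => -i) (j := fun i : ℤ => -i) ?_ ?_ ?_ ?_ ?_
      · intro a ha; simp only [Finset.mem_Icc] at *; omega
      · intro a ha; simp only [Finset.mem_Icc] at *; omega
      · intro a _; ring
      · intro a _; ring
      · intro a _; simp
    obtain ⟨q, hq, he⟩ := aux_eval n m hm (fun i : ℤ => c (-i)) (by simpa using hcm)
      (invert h) hinv
    refine ⟨q, hq, ?_⟩
    have hcomp : ((LaurentPolynomial.invert (R := R)).toAlgHom.toRingHom).comp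
        ((Polynomial.aeval (invert h) : Polynomial R →ₐ[R] LaurentPolynomial R) :
          Polynomial R →+* LaurentPolynomial R) = f := by
      apply Polynomial.ringHom_ext
      · intro a
        simp [Polynomial.aeval_C, ← LaurentPolynomial.C_eq_algebraMap, fC a]
      · show invert ((Polynomial.aeval (invert h)) Polynomial.X) = f Polynomial.X
        rw [Polynomial.aeval_X]
        show invert (invert h) = (Polynomial.aeval h) Polynomial.X
        rw [Polynomial.aeval_X, LaurentPolynomial.involutive_invert h]
    have hk := congrArg (LaurentPolynomial.invert (R := R)).toAlgHom.toRingHom he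
    rw [Polynomial.hom_eval₂, hcomp, map_zero] at hk
    have hk' : Polynomial.eval₂ f (T (-1)) q = 0 := by simpa using hk
    exact hk'
  have htop : Algebra.adjoin (Polynomial R)
      ({T 1, T (-1)} : Set (LaurentPolynomial R)) = ⊤ := by
    rw [eq_top_iff]
    rintro x -
    induction x using LaurentPolynomial.induction_on' with
    | add p q hp hq => exact add_mem hp hq
    | C_mul_T k a =>
      have hCa : (LaurentPolynomial.C a : LaurentPolynomial R) ∈
          Algebra.adjoin (Polynomial R) ({T 1, T (-1)} : Set (LaurentPolynomial R)) := by
        rw [← fC a]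
        exact Subalgebra.algebraMap_mem _ (Polynomial.C a)
      refine mul_mem hCa ?_
      rcases le_or_gt 0 k with hk | hk
      · have : (T k : LaurentPolynomial R) = T 1 ^ k.toNat := by
          rw [T_pow]; congr 1; omega
        rw [this]
        exact pow_mem (Algebra.subset_adjoin (by simp)) _
      · have : (T k : LaurentPolynomial R) = T (-1) ^ (-k).toNat := by
          rw [T_pow]; congr 1; omega
        rw [this]
        exact pow_mem (Algebra.subset_adjoin (by simp)) _
  have fg := fg_adjoin_of_finite (Set.toFinite ({T 1, T (-1)} : Set (LaurentPolynomial R)))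
    (by rintro x (rfl | rfl); exacts [h1, h2])
  exact ⟨by rwa [htop, Algebra.top_toSubmodule] at fg⟩
end

section
/- Let k be an algebraically closed field of characteristic p > 0, let r, d, s be positive integers with r and d coprime to p and 1 \leq s < p, and let \alpha = \sum_{i=-s}^{\infty} a_i t^i \in k((t)) with a_{-s} \neq 0. Suppose that every d-th root of unity \mu in k satisfies \alpha(\mu t) - \alpha(t) = \gamma^p - \gamma for some \gamma \in k((t)) (i.e., \mu_d(k) \subseteq G(\alpha(t), r), with d dividing r assumed via this containment of root-of-unity groups). Then d divides r, d divides s, and a_i = 0 for every i with -s \leq i \leq -1 and d not dividing i. -/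
/-- For `α = ∑ᵢ aᵢ tⁱ ∈ k((t))` and `μ ∈ k`, the Laurent series
`α(μt) = ∑ᵢ μⁱ aᵢ tⁱ`. -/
noncomputable def LaurentSeries.scaleVar {k : Type*} [Field k] (μ : k) (α : LaurentSeries k) :
    LaurentSeries k where
  coeff i := μ ^ i * α.coeff i
  isPWO_support' := α.isPWO_support'.mono (by
    intro i hi
    simp only [Function.mem_support, ne_eq] at hi ⊢
    intro h
    exact hi (by rw [h, mul_zero]))

/-- The set `G(α(t), r)` of `r`-th roots of unity `μ` such that
`α(μt) - α(t) = γ^p - γ` for some Laurent series `γ`. -/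
def LaurentSeries.asGroup {k : Type*} [Field k] (p : ℕ) (α : LaurentSeries k) (r : ℕ) :
    Set k :=
  {μ | μ ^ r = 1 ∧ ∃ γ : LaurentSeries k, LaurentSeries.scaleVar μ α - α = γ ^ p - γ}

/-- Lemma 2.10(i): let `k` be algebraically closed of characteristic `p > 0`, let
`r, d, s ≥ 1` with `r, d` coprime to `p` and `s < p`, and let
`α = ∑_{i ≥ -s} aᵢ tⁱ ∈ k((t))` with `a₋ₛ ≠ 0`. If `μ_d(k) ⊆ G(α(t), r)`, then `d ∣ r`,
`d ∣ s`, and `aᵢ = 0` for every `i` with `-s ≤ i ≤ -1` not divisible by `d`. -/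
theorem dvd_and_coeff_eq_zero_of_rootsOfUnity_subset
    {k : Type*} [Field k] [IsAlgClosed k] (p : ℕ) (hp : p.Prime) [CharP k p]
    (r d s : ℕ) (hr : 0 < r) (hd : 0 < d) (hs : 1 ≤ s) (hsp : s < p)
    (hrp : Nat.Coprime r p) (hdp : Nat.Coprime d p)
    (α : LaurentSeries k)
    (hcoeff : α.coeff (-(s : ℤ)) ≠ 0)
    (hbelow : ∀ i : ℤ, i < -(s : ℤ) → α.coeff i = 0)
    (hsub : ∀ μ : k, μ ^ d = 1 → μ ∈ LaurentSeries.asGroup p α r) :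
    d ∣ r ∧ d ∣ s ∧
      ∀ i : ℤ, -(s : ℤ) ≤ i → i ≤ -1 → ¬ ((d : ℤ) ∣ i) → α.coeff i = 0 := by

  -- `d` is invertible in `k`
  have hdk : (d : k) ≠ 0 := by
    intro h
    have hpd : p ∣ d := (CharP.cast_eq_zero_iff k p d).mp h
    have h1 : p ∣ Nat.gcd d p := Nat.dvd_gcd hpd dvd_rfl
    rw [Nat.Coprime] at hdp
    rw [hdp] at h1
    exact hp.one_lt.ne' (Nat.dvd_one.mp h1)
  have : NeZero ((d : k)) := ⟨hdk⟩
  obtain ⟨ζ, hζ⟩ := HasEnoughRootsOfUnity.exists_primitiveRoot k d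
  -- key: for each `μ` with `μ ^ d = 1` and each `i < 0`, `(μ ^ i - 1) * α.coeff i = 0`
  have key : ∀ μ : k, μ ^ d = 1 → ∀ i : ℤ, i < 0 → (μ ^ i - 1) * α.coeff i = 0 := by
    intro μ hμ i hi
    obtain ⟨-, γ, hγ⟩ := hsub μ hμ
    have hβ : ∀ j : ℤ, (γ ^ p - γ).coeff j = μ ^ j * α.coeff j - α.coeff j := by
      intro j
      rw [← hγ, HahnSeries.coeff_sub]
      rfl
    rcases eq_or_ne γ 0 with rfl | hγ0
    · have := hβ i
      rw [show (0 : LaurentSeries k) ^ p - 0 = 0 by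
            simp [zero_pow hp.ne_zero]] at this
      rw [sub_mul, one_mul, ← this, HahnSeries.coeff_zero]
    · rcases lt_or_ge γ.order 0 with hv | hv
      · -- impossible: would give a nonzero coefficient below `-s`
        exfalso
        have hvle : γ.order ≤ -1 := by omega
        have hord : (γ ^ p).order = p * γ.order := by
          rw [HahnSeries.order_pow]; simp [nsmul_eq_mul]
        have hlt : (γ ^ p).order < γ.order := by
          rw [hord]
          nlinarith [hp.two_le, γ.order, (show (2 : ℤ) ≤ (p : ℤ) by exact_mod_cast hp.two_le)]
        have h1 : γ.coeff ((γ ^ p).order) = 0 :=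
          HahnSeries.coeff_eq_zero_of_lt_order hlt
        have h2 : (γ ^ p).coeff ((γ ^ p).order) ≠ 0 :=
          mt HahnSeries.coeff_order_eq_zero.mp (pow_ne_zero _ hγ0)
        have h3 : (γ ^ p - γ).coeff ((γ ^ p).order) ≠ 0 := by
          rw [HahnSeries.coeff_sub, h1, sub_zero]; exact h2
        have hps : (γ ^ p).order < -(s : ℤ) := by
          rw [hord]
          have : (p : ℤ) * γ.order ≤ (p : ℤ) * (-1) :=
            mul_le_mul_of_nonneg_left hvle (by positivity)
          omega
        have : α.coeff ((γ ^ p).order) = 0 := hbelow _ hps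
        rw [hβ, this, mul_zero, sub_zero] at h3
        exact h3 rfl
      · -- `γ.order ≥ 0`: all negative coefficients of `γ ^ p - γ` vanish
        have h1 : γ.coeff i = 0 := HahnSeries.coeff_eq_zero_of_lt_order (lt_of_lt_of_le hi hv)
        have h2 : (γ ^ p).coeff i = 0 := by
          apply HahnSeries.coeff_eq_zero_of_lt_order
          rw [HahnSeries.order_pow]
          refine lt_of_lt_of_le hi ?_
          simpa [nsmul_eq_mul] using mul_nonneg (by positivity : (0:ℤ) ≤ (p:ℤ)) hv
        have := hβ i
        rw [HahnSeries.coeff_sub, h1, h2, sub_zero] at this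
        rw [sub_mul, one_mul, ← this]
  have hζd : ζ ^ d = 1 := hζ.pow_eq_one
  refine ⟨?_, ?_, ?_⟩
  · exact (hζ.pow_eq_one_iff_dvd r).mp (hsub ζ hζd).1
  · have h := key ζ hζd (-(s : ℤ)) (by omega)
    rcases mul_eq_zero.mp h with h' | h'
    · have : ζ ^ (-(s : ℤ)) = 1 := by linear_combination h'
      have := (hζ.zpow_eq_one_iff_dvd _).mp this
      rw [dvd_neg] at this
      exact_mod_cast this
    · exact absurd h' hcoeff
  · intro i hi1 hi2 hdi
    have h := key ζ hζd i (by omega)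
    rcases mul_eq_zero.mp h with h' | h'
    · exact absurd ((hζ.zpow_eq_one_iff_dvd i).mp (by linear_combination h')) hdi
    · exact h'
end

section
/- Let V be a finite-dimensional irreducible representation of J over F such that the image of P in GL(V) is finite. Then there exists a one-dimensional representation L of J over F with P contained in the kernel of L such that the representation V \otimes L^{-1} has finite image in GL(V). -/
open TensorProduct

section Defs

variable {F : Type*} [Field F] {G : Type*} [Group G]

/-- A subspace `p` is invariant under the representation `ρ`. -/
def IsInvariantSubspace {V : Type*} [AddCommGroup V] [Module F V]
    (ρ : Representation F G V) (p : Submodule F V) : Prop :=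
  ∀ (x : G), ∀ v ∈ p, ρ x v ∈ p

/-- The restriction of a representation to an invariant subspace. -/
def Representation.restrictSubspace {V : Type*} [AddCommGroup V] [Module F V]
    (ρ : Representation F G V) (p : Submodule F V) (hp : IsInvariantSubspace ρ p) :
    Representation F G p where
  toFun x := (ρ x).restrict (hp x)
  map_one' := by
    refine LinearMap.ext fun v => Subtype.ext ?_
    simp [LinearMap.restrict_apply]
  map_mul' x y := by
    refine LinearMap.ext fun v => Subtype.ext ?_
    simp [LinearMap.restrict_apply]

/-- Two representations are isomorphic if there is an equivariant linear equivalence. -/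
def RepIso {V V' : Type*} [AddCommGroup V] [Module F V] [AddCommGroup V'] [Module F V']
    (ρ : Representation F G V) (ρ' : Representation F G V') : Prop :=
  ∃ e : V ≃ₗ[F] V', ∀ (x : G) (v : V), e (ρ x v) = ρ' x (e v)

/-- A representation is irreducible if it is nonzero and its only invariant subspaces
are `⊥` and `⊤`. -/
def IsIrreducibleRep {V : Type*} [AddCommGroup V] [Module F V]
    (ρ : Representation F G V) : Prop :=
  Nontrivial V ∧ ∀ p : Submodule F V, IsInvariantSubspace ρ p → p = ⊥ ∨ p = ⊤

/-- A representation is indecomposable if it is nonzero and is not the direct sum of two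
proper (nonzero) invariant subspaces. -/
def IsIndecomposableRep {V : Type*} [AddCommGroup V] [Module F V]
    (ρ : Representation F G V) : Prop :=
  Nontrivial V ∧ ∀ p q : Submodule F V, IsInvariantSubspace ρ p → IsInvariantSubspace ρ q →
    IsCompl p q → p = ⊥ ∨ q = ⊥

end Defs

/-- The `n × n` unipotent upper-triangular matrix with `1`'s on the diagonal and on the
superdiagonal: a single Jordan block with eigenvalue `1`. -/
def jordanMatrix (F : Type*) [Field F] (n : ℕ) : Matrix (Fin n) (Fin n) F :=
  Matrix.of fun i j => if (j : ℕ) = (i : ℕ) ∨ (j : ℕ) = (i : ℕ) + 1 then 1 else 0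

/-- `U` is the representation `U(n)` of `J`: the group `P` acts trivially and `g` acts by
the unipotent `n × n` Jordan block. -/
def IsUnipotentJordanRep {F : Type*} [Field F] {J : Type*} [Group J]
    (P : Subgroup J) (g : J) (n : ℕ) (U : Representation F J (Fin n → F)) : Prop :=
  (∀ σ ∈ P, U σ = 1) ∧ U g = Matrix.toLin' (jordanMatrix F n)

/-- Lemma 2.2(ii): let `F` be an algebraically closed field of characteristic `0`, `J` a
group, `P` a normal subgroup, and `g ∈ J` such that `J` is generated by `P` and `g` and
`J/P` is infinite cyclic generated by the image of `g`. If `V` is a finite-dimensional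
irreducible representation of `J` over `F` on which `P` has finite image, then there is a
one-dimensional representation (character) `χ` of `J`, trivial on `P`, such that the
twisted representation `V ⊗ χ⁻¹`, i.e. `x ↦ χ(x)⁻¹ • ρ(x)`, has finite image. -/
theorem exists_character_twist_finite_image
    {F : Type*} [Field F] [IsAlgClosed F] [CharZero F]
    {J : Type*} [Group J] (P : Subgroup J) [P.Normal] (g : J)
    (hgen : Subgroup.closure ((P : Set J) ∪ {g}) = ⊤)
    (hfree : ∀ m : ℤ, g ^ m ∈ P → m = 0)
    {V : Type*} [AddCommGroup V] [Module F V] [FiniteDimensional F V]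
    (ρ : Representation F J V)
    (hirr : IsIrreducibleRep ρ)
    (hPfin : (Set.range fun x : P => ρ (x : J)).Finite) :
    ∃ χ : J →* Fˣ, (∀ σ ∈ P, χ σ = 1) ∧
      (Set.range fun x : J => ((↑(χ x)⁻¹ : F) • ρ x : V →ₗ[F] V)).Finite := by

  classical
  haveI : Nontrivial V := hirr.1
  -- work with units of the endomorphism ring
  let ρu : J →* (Module.End F V)ˣ := MonoidHom.toHomUnits ρ
  have hρu : ∀ x : J, ((ρu x : (Module.End F V)ˣ) : Module.End F V) = ρ x := fun x => rfl
  let S' : Set (Module.End F V)ˣ := Set.range fun x : P => ρu (x : J)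
  have hS'fin : S'.Finite := by
    apply Set.Finite.of_finite_image (f := Units.val)
    · apply hPfin.subset
      rintro _ ⟨_, ⟨σ, rfl⟩, rfl⟩
      exact ⟨σ, rfl⟩
    · exact fun u _ v _ h => Units.ext h
  haveI := hS'fin.to_subtype
  set a : (Module.End F V)ˣ := ρu g with ha
  -- conjugation maps on S'
  have hmaps : ∀ n : ℕ, Set.MapsTo (fun A => a ^ n * A * (a ^ n)⁻¹) S' S' := by
    rintro n _ ⟨σ, rfl⟩
    refine ⟨⟨g ^ n * (σ : J) * (g ^ n)⁻¹, Subgroup.Normal.conj_mem ‹P.Normal› _ σ.2 _⟩, ?_⟩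
    simp only [map_mul, map_inv, map_pow, ha]
  let c : ℕ → (↥S' → ↥S') := fun n => (hmaps n).restrict _ _ _
  obtain ⟨i, j, hij, hcij⟩ : ∃ i j, i < j ∧ c i = c j := by
    obtain ⟨m₁, m₂, hne, h⟩ := Finite.exists_ne_map_eq_of_infinite c
    rcases hne.lt_or_gt with h' | h'
    · exact ⟨m₁, m₂, h', h⟩
    · exact ⟨m₂, m₁, h', h.symm⟩
  set N : ℕ := j - i with hNdef
  have hNpos : 0 < N := Nat.sub_pos_of_lt hij
  have hj : j = i + N := by omega
  have hcomm : ∀ σ : P, Commute (a ^ N) (ρu (σ : J)) := by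
    intro σ
    have h1 := congrArg Subtype.val (congrFun hcij ⟨ρu (σ : J), ⟨σ, rfl⟩⟩)
    simp only [c, Set.MapsTo.val_restrict_apply] at h1
    set s := ρu (σ : J) with hs
    rw [hj, pow_add, mul_inv_rev] at h1
    have h2 := congrArg (fun z => (a ^ i)⁻¹ * z * a ^ i) h1
    simp only [mul_assoc, inv_mul_cancel_left, inv_mul_cancel, mul_one] at h2
    -- h2 : s = a^N * (s * ((a^N)⁻¹))  (roughly)
    have h3 : s = a ^ N * s * (a ^ N)⁻¹ := by
      rw [mul_assoc]; exact h2
    exact (mul_inv_eq_iff_eq_mul.mp h3.symm)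
  -- commute with the whole image
  have hcommAll : ∀ x : J, Commute (a ^ N) (ρu x) := by
    intro x
    have hx : x ∈ Subgroup.closure ((P : Set J) ∪ {g}) := hgen ▸ Subgroup.mem_top x
    induction hx using Subgroup.closure_induction with
    | mem y hy =>
      rcases hy with hy | hy
      · exact hcomm ⟨y, hy⟩
      · rw [Set.mem_singleton_iff.mp hy]; exact (Commute.refl a).pow_left N
    | one => simp only [map_one]; exact Commute.one_right (a ^ N)
    | mul x y hx hy ihx ihy => rw [map_mul]; exact ihx.mul_right ihy
    | inv x hx ih => rw [map_inv]; exact ih.inv_right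
  set f : Module.End F V := ρ (g ^ N) with hf
  have hval_f : ((a ^ N : (Module.End F V)ˣ) : Module.End F V) = f := by
    rw [Units.val_pow_eq_pow_val, hf, map_pow]; rfl
  have hcommEnd : ∀ x : J, f * ρ x = ρ x * f := by
    intro x
    have := congrArg Units.val (hcommAll x)
    simpa only [Units.val_mul, hval_f, hρu] using this
  -- Schur: f is scalar
  obtain ⟨lam, hlam⟩ := Module.End.exists_eigenvalue f
  have hinv : IsInvariantSubspace ρ (f.eigenspace lam) := by
    intro x v hv
    rw [Module.End.mem_eigenspace_iff] at hv ⊢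
    calc f (ρ x v) = (f * ρ x) v := rfl
      _ = (ρ x * f) v := by rw [hcommEnd]
      _ = ρ x (f v) := rfl
      _ = lam • ρ x v := by rw [hv, map_smul]
  have htop : f.eigenspace lam = ⊤ := by
    rcases hirr.2 _ hinv with h | h
    · exact absurd h hlam
    · exact h
  have hfv : ∀ v : V, f v = lam • v := by
    intro v
    have hv : v ∈ f.eigenspace lam := htop.symm ▸ Submodule.mem_top
    exact Module.End.mem_eigenspace_iff.mp hv
  have hScalar : f = lam • (1 : Module.End F V) := by
    ext v; simp [hfv v]
  have hlam0 : lam ≠ 0 := by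
    intro h0
    obtain ⟨v, hv⟩ := exists_ne (0 : V)
    apply hv
    have hBf : (((a ^ N)⁻¹ : (Module.End F V)ˣ) : Module.End F V) * f = 1 := by
      rw [← hval_f, ← Units.val_mul, inv_mul_cancel, Units.val_one]
    calc v = ((((a ^ N)⁻¹ : (Module.End F V)ˣ) : Module.End F V) * f) v := by
            rw [hBf]; rfl
      _ = (((a ^ N)⁻¹ : (Module.End F V)ˣ) : Module.End F V) (f v) := rfl
      _ = 0 := by rw [hfv v, h0, zero_smul, map_zero]
  -- N-th root
  obtain ⟨μ, hμ⟩ := IsAlgClosed.exists_pow_nat_eq lam hNpos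
  have hμ0 : μ ≠ 0 := by
    intro h; apply hlam0; rw [← hμ, h, zero_pow hNpos.ne']
  set u : Fˣ := Units.mk0 μ hμ0 with hu
  -- the quotient is infinite cyclic generated by t
  set t : J ⧸ P := QuotientGroup.mk' P g with ht
  have hmkpow : ∀ m : ℤ, (QuotientGroup.mk (g ^ m) : J ⧸ P) = t ^ m := by
    intro m; rw [ht]; exact map_zpow (QuotientGroup.mk' P) g m
  have hzt : Subgroup.zpowers t = ⊤ := by
    refine top_unique ?_
    rw [← Subgroup.map_top_of_surjective _ (QuotientGroup.mk'_surjective P), ← hgen,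
      MonoidHom.map_closure]
    refine (Subgroup.closure_le _).mpr ?_
    rintro _ ⟨y, hy, rfl⟩
    rcases hy with hy | hy
    · have : (QuotientGroup.mk' P) y = 1 := (QuotientGroup.eq_one_iff _).mpr hy
      rw [this]; exact one_mem _
    · rw [Set.mem_singleton_iff.mp hy]; exact Subgroup.mem_zpowers t
  have hinjz : Function.Injective (zpowersHom (J ⧸ P) t) := by
    rw [injective_iff_map_eq_one]
    intro m hm
    rw [zpowersHom_apply] at hm
    have : g ^ (Multiplicative.toAdd m) ∈ P := by
      rw [← QuotientGroup.eq_one_iff, hmkpow]; exact hm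
    have h0 := hfree _ this
    rw [← ofAdd_toAdd m, h0, ofAdd_zero]
  have hsurjz : Function.Surjective (zpowersHom (J ⧸ P) t) := by
    intro q
    have hq : q ∈ Subgroup.zpowers t := hzt ▸ Subgroup.mem_top q
    obtain ⟨m, hm⟩ := Subgroup.mem_zpowers_iff.mp hq
    exact ⟨Multiplicative.ofAdd m, hm⟩
  have hbij : Function.Bijective (zpowersHom (J ⧸ P) t) := ⟨hinjz, hsurjz⟩
  set e : J ⧸ P ≃* Multiplicative ℤ :=
    (MulEquiv.ofBijective (zpowersHom (J ⧸ P) t) hbij).symm with he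
  set χ : J →* Fˣ :=
    (zpowersHom Fˣ u).comp (e.toMonoidHom.comp (QuotientGroup.mk' P)) with hχ
  have hχP : ∀ σ ∈ P, χ σ = 1 := by
    intro σ hσ
    rw [hχ]
    simp only [MonoidHom.comp_apply, MonoidHom.coe_coe]
    rw [show (QuotientGroup.mk' P) σ = 1 from (QuotientGroup.eq_one_iff _).mpr hσ,
      map_one, map_one]
  have het : e t = Multiplicative.ofAdd 1 := by
    apply hinjz
    rw [he, MulEquiv.ofBijective_apply_symm_apply, zpowersHom_apply, toAdd_ofAdd, zpow_one]
  have hχg : χ g = u := by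
    simp only [hχ, MonoidHom.comp_apply, MonoidHom.coe_coe, MulEquiv.coe_toMonoidHom, ← ht, het, zpowersHom_apply,
      toAdd_ofAdd, zpow_one]
  -- χ(g^m) = u^m at the value level
  have hχgz : ∀ m : ℤ, χ (g ^ m) = u ^ m := by
    intro m; rw [map_zpow, hχg]
  -- the twisted representation as a homomorphism into units
  let ι : Fˣ →* (Module.End F V)ˣ :=
    Units.map (algebraMap F (Module.End F V)).toMonoidHom
  have hιval : ∀ cc : Fˣ, ((ι cc : (Module.End F V)ˣ) : Module.End F V)
      = algebraMap F (Module.End F V) (cc : F) := fun cc => rfl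
  have hcen : ∀ (cc : Fˣ) (A : (Module.End F V)ˣ), ι cc * A = A * ι cc := by
    intro cc A
    apply Units.ext
    simp only [Units.val_mul, hιval]
    exact Algebra.commutes (cc : F) (A : Module.End F V)
  have hceninv : ∀ (cc : Fˣ) (A : (Module.End F V)ˣ), (ι cc)⁻¹ * A = A * (ι cc)⁻¹ := by
    intro cc A
    have hcom : Commute (ι cc) A := hcen cc A
    exact hcom.inv_left.eq
  let ψu : J →* (Module.End F V)ˣ :=
    { toFun := fun x => (ι (χ x))⁻¹ * ρu x
      map_one' := by simp
      map_mul' := by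
        intro x y
        simp only [map_mul, mul_inv_rev]
        rw [hceninv (χ y) (ι (χ x))⁻¹]
        simp only [mul_assoc]
        congr 1
        rw [← mul_assoc, hceninv (χ y) (ρu x), mul_assoc] }
  have hψval : ∀ x : J,
      ((ψu x : (Module.End F V)ˣ) : Module.End F V) = (↑(χ x)⁻¹ : F) • ρ x := by
    intro x
    show (((ι (χ x))⁻¹ * ρu x : (Module.End F V)ˣ) : Module.End F V) = _
    rw [Units.val_mul, ← map_inv ι, hιval, hρu, Algebra.smul_def]
  have hψP : ∀ σ : P, ψu (σ : J) = ρu (σ : J) := by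
    intro σ
    show (ι (χ σ))⁻¹ * ρu (σ : J) = ρu (σ : J)
    rw [hχP σ σ.2, map_one, inv_one, one_mul]
  have hψgN : ψu (g ^ N) = 1 := by
    apply Units.ext
    rw [hψval, Units.val_one]
    have hχN : χ (g ^ N) = u ^ N := by rw [map_pow, hχg]
    have huv : (↑(χ (g ^ N))⁻¹ : F) = lam⁻¹ := by
      rw [hχN, ← hμ]
      simp [hu, Units.val_pow_eq_pow_val]
    rw [huv, ← hf, hScalar, smul_smul, inv_mul_cancel₀ hlam0, one_smul]
  have hψgz : ∀ m : ℤ, ψu (g ^ m) = ψu (g ^ ((m % (N : ℤ)).toNat)) := by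
    intro m
    have hNne : (N : ℤ) ≠ 0 := by exact_mod_cast hNpos.ne'
    have hnn : 0 ≤ m % (N : ℤ) := Int.emod_nonneg m hNne
    have hdecomp : g ^ m = (g ^ N) ^ (m / (N : ℤ)) * g ^ ((m % (N : ℤ)).toNat) := by
      rw [← zpow_natCast g ((m % (N : ℤ)).toNat), Int.toNat_of_nonneg hnn,
        ← zpow_natCast g N, ← zpow_mul, ← zpow_add, Int.mul_ediv_add_emod]
    rw [hdecomp, map_mul, map_zpow, hψgN, one_zpow, one_mul]
  -- finiteness
  have hkey : (Set.range ψu).Finite := by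
    have hTfin : ((fun r : ℕ => ψu (g ^ r)) '' Set.Iio N).Finite :=
      (Set.finite_Iio N).image _
    refine (hTfin.image2 (· * ·) hS'fin).subset ?_
    rintro _ ⟨x, rfl⟩
    have hq : (QuotientGroup.mk x : J ⧸ P) ∈ Subgroup.zpowers t := hzt ▸ Subgroup.mem_top _
    obtain ⟨m, hm⟩ := Subgroup.mem_zpowers_iff.mp hq
    have hσ : (g ^ m)⁻¹ * x ∈ P := by
      rw [← QuotientGroup.eq]
      show (QuotientGroup.mk (g ^ m) : J ⧸ P) = QuotientGroup.mk x
      rw [hmkpow m, hm]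
    have hx : x = g ^ m * ((g ^ m)⁻¹ * x) := by group
    have hNne : (N : ℤ) ≠ 0 := by exact_mod_cast hNpos.ne'
    have hrlt : (m % (N : ℤ)).toNat < N := by
      have h1 := Int.emod_nonneg m hNne
      have h2 := Int.emod_lt_of_pos m (by exact_mod_cast hNpos : (0 : ℤ) < (N : ℤ))
      omega
    have hxval : ψu x = ψu (g ^ ((m % (N : ℤ)).toNat)) * ρu ((g ^ m)⁻¹ * x) := by
      conv_lhs => rw [hx]
      rw [map_mul, hψgz m, hψP ⟨(g ^ m)⁻¹ * x, hσ⟩]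
    rw [hxval]
    exact Set.mem_image2_of_mem ⟨(m % (N : ℤ)).toNat, hrlt, rfl⟩ ⟨⟨(g ^ m)⁻¹ * x, hσ⟩, rfl⟩
  refine ⟨χ, hχP, ?_⟩
  have hrangeeq : (Set.range fun x : J => ((↑(χ x)⁻¹ : F) • ρ x : V →ₗ[F] V))
      = Units.val '' Set.range ψu := by
    rw [← Set.range_comp]
    exact congrArg Set.range (funext fun x => (hψval x).symm)
  rw [hrangeeq]
  exact hkey.image _
end

section
/- Let W be a finite-dimensional irreducible representation of J over F such that the image of P in GL(W) is finite. Then for every positive integer n, the representation W \otimes U(n) of J is indecomposable. -/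
open TensorProduct

namespace JordanAux

variable {F : Type*} [Field F] {W : Type*} [AddCommGroup W] [Module F W]

noncomputable def pim (n : ℕ) (i : ℤ) : W ⊗[F] (Fin n → F) →ₗ[F] W :=
  if h : 0 ≤ i ∧ i < n then
    (TensorProduct.rid F W).toLinearMap ∘ₗ
      LinearMap.lTensor W (LinearMap.proj (⟨i.toNat, by omega⟩ : Fin n))
  else 0

noncomputable def iom (n : ℕ) (j : ℤ) : W →ₗ[F] W ⊗[F] (Fin n → F) :=
  if h : 0 ≤ j ∧ j < n then
    (TensorProduct.mk F W (Fin n → F)).flip (Pi.single (⟨j.toNat, by omega⟩ : Fin n) 1)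
  else 0

lemma pim_out {n : ℕ} {i : ℤ} (h : ¬ (0 ≤ i ∧ i < n)) :
    (pim n i : W ⊗[F] (Fin n → F) →ₗ[F] W) = 0 := by
  rw [pim, dif_neg h]

lemma iom_out {n : ℕ} {j : ℤ} (h : ¬ (0 ≤ j ∧ j < n)) :
    (iom n j : W →ₗ[F] W ⊗[F] (Fin n → F)) = 0 := by
  rw [iom, dif_neg h]

lemma pim_apply {n : ℕ} {i : ℤ} (h : 0 ≤ i ∧ i < n) (w : W) (v : Fin n → F) :
    (pim n i : W ⊗[F] (Fin n → F) →ₗ[F] W) (w ⊗ₜ v) = v ⟨i.toNat, by omega⟩ • w := by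
  rw [pim, dif_pos h]
  simp

lemma iom_apply {n : ℕ} {j : ℤ} (h : 0 ≤ j ∧ j < n) (w : W) :
    (iom n j : W →ₗ[F] W ⊗[F] (Fin n → F)) w
      = w ⊗ₜ Pi.single (⟨j.toNat, by omega⟩ : Fin n) (1:F) := by
  rw [iom, dif_pos h]
  rfl

lemma pim_apply_fin {n : ℕ} (i : Fin n) (w : W) (v : Fin n → F) :
    (pim n ((i:ℕ):ℤ) : W ⊗[F] (Fin n → F) →ₗ[F] W) (w ⊗ₜ v) = v i • w := by
  rw [pim_apply ⟨by omega, by exact_mod_cast i.isLt⟩]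
  congr 1

lemma iom_apply_fin {n : ℕ} (j : Fin n) (w : W) :
    (iom n ((j:ℕ):ℤ) : W →ₗ[F] W ⊗[F] (Fin n → F)) w = w ⊗ₜ Pi.single j (1:F) := by
  rw [iom_apply ⟨by omega, by exact_mod_cast j.isLt⟩]
  congr 2

lemma sum_iom_pim {n : ℕ} :
    (∑ k ∈ Finset.range n, (iom n (k:ℤ) : W →ₗ[F] W ⊗[F] (Fin n → F)) ∘ₗ pim n (k:ℤ))
      = LinearMap.id := by
  apply TensorProduct.ext'
  intro w v
  rw [LinearMap.sum_apply, Finset.sum_range (fun k =>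
    ((iom n (k:ℤ) : W →ₗ[F] W ⊗[F] (Fin n → F)) ∘ₗ pim n (k:ℤ)) (w ⊗ₜ v))]
  have h1 : ∀ j : Fin n,
      ((iom n ((j:ℕ):ℤ) : W →ₗ[F] W ⊗[F] (Fin n → F)) ∘ₗ pim n ((j:ℕ):ℤ)) (w ⊗ₜ v)
        = w ⊗ₜ Pi.single j (v j) := by
    intro j
    rw [LinearMap.comp_apply, pim_apply_fin, map_smul, iom_apply_fin]
    rw [TensorProduct.smul_tmul', TensorProduct.smul_tmul]
    congr 1
    rw [← Pi.single_smul, smul_eq_mul, mul_one]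
  calc (∑ j : Fin n, ((iom n ((j:ℕ):ℤ) : W →ₗ[F] W ⊗[F] (Fin n → F)) ∘ₗ pim n ((j:ℕ):ℤ)) (w ⊗ₜ v))
      = ∑ j : Fin n, w ⊗ₜ[F] Pi.single j (v j) := Finset.sum_congr rfl (fun j _ => h1 j)
    _ = w ⊗ₜ[F] ∑ j : Fin n, Pi.single j (v j) := by rw [TensorProduct.tmul_sum]
    _ = w ⊗ₜ[F] v := by rw [Finset.univ_sum_single]
  
lemma pim_comp_iom {n : ℕ} {i j : ℤ} (hi : 0 ≤ i ∧ i < n) (hj : 0 ≤ j ∧ j < n) :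
    (pim n i : W ⊗[F] (Fin n → F) →ₗ[F] W) ∘ₗ iom n j
      = if i = j then LinearMap.id else 0 := by
  ext w
  rw [LinearMap.comp_apply, iom_apply hj, pim_apply hi, Pi.single_apply]
  by_cases h : i = j
  · subst h
    simp
  · have hne : (⟨i.toNat, by omega⟩ : Fin n) ≠ ⟨j.toNat, by omega⟩ := by
      simp only [ne_eq, Fin.mk.injEq]
      omega
    rw [if_neg hne, if_neg h]
    simp



lemma sum_coe_single {n : ℕ} (c : ℕ) (v : Fin n → F) :
    ∑ j : Fin n, (if (j:ℕ) = c then v j else 0) = if h : c < n then v ⟨c, h⟩ else 0 := by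
  by_cases h : c < n
  · rw [dif_pos h, Finset.sum_eq_single (⟨c, h⟩ : Fin n)]
    · simp
    · intro b _ hb
      rw [if_neg]
      simp only [ne_eq, Fin.ext_iff] at hb
      simpa using hb
    · simp
  · rw [dif_neg h, Finset.sum_eq_zero]
    intro j _
    rw [if_neg]
    omega

lemma jmul {n : ℕ} (i : Fin n) (v : Fin n → F) :
    (jordanMatrix F n).mulVec v i
      = v i + (if h : (i:ℕ)+1 < n then v ⟨(i:ℕ)+1, h⟩ else 0) := by
  simp only [Matrix.mulVec, dotProduct, jordanMatrix, Matrix.of_apply]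
  have h1 : ∀ j : Fin n,
      (if (j:ℕ) = (i:ℕ) ∨ (j:ℕ) = (i:ℕ) + 1 then (1:F) else 0) * v j
        = (if (j:ℕ) = (i:ℕ) then v j else 0) + (if (j:ℕ) = (i:ℕ)+1 then v j else 0) := by
    intro j
    by_cases ha : (j:ℕ) = (i:ℕ)
    · rw [if_pos (Or.inl ha), if_pos ha, if_neg (by omega), one_mul, add_zero]
    · by_cases hb : (j:ℕ) = (i:ℕ)+1
      · rw [if_pos (Or.inr hb), if_pos hb, if_neg ha, one_mul, zero_add]
      · rw [if_neg (by tauto), if_neg ha, if_neg hb, zero_mul, add_zero]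
  rw [Finset.sum_congr rfl (fun j _ => h1 j), Finset.sum_add_distrib,
    sum_coe_single, sum_coe_single, dif_pos i.isLt]

lemma jcol {n : ℕ} (j : Fin n) :
    (fun i => jordanMatrix F n i j)
      = Pi.single j (1:F) + (if h : 1 ≤ (j:ℕ) then Pi.single (⟨(j:ℕ)-1, by omega⟩ : Fin n) (1:F) else 0) := by
  funext i
  simp only [jordanMatrix, Matrix.of_apply, Pi.add_apply]
  by_cases h : 1 ≤ (j:ℕ)
  · rw [dif_pos h]
    simp only [Pi.single_apply]
    by_cases ha : i = j
    · rw [if_pos (by omega), if_pos ha, if_neg (by simp [Fin.ext_iff]; omega)]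
      ring
    · by_cases hb : (i:ℕ) = (j:ℕ) - 1
      · rw [if_pos (by simp [Fin.ext_iff] at ha ⊢; omega), if_neg ha,
          if_pos (by simp [Fin.ext_iff]; omega)]
        ring
      · rw [if_neg (by simp [Fin.ext_iff] at ha ⊢; omega), if_neg ha,
          if_neg (by simp [Fin.ext_iff]; omega)]
        ring
  · rw [dif_neg h]
    simp only [Pi.single_apply, Pi.zero_apply]
    by_cases ha : i = j
    · rw [if_pos (by simp [Fin.ext_iff] at ha ⊢; omega), if_pos ha]; ring
    · rw [if_neg (by simp [Fin.ext_iff] at ha ⊢; omega), if_neg ha]; ring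

section Equivariance

variable {F : Type*} [Field F] {W : Type*} [AddCommGroup W] [Module F W]
  {J : Type*} [Group J] {n : ℕ}
  (σ : Representation F J W) (U : Representation F J (Fin n → F))

lemma pim_comm_g (g : J) (hUg : U g = Matrix.toLin' (jordanMatrix F n)) (i : ℤ) (hi : 0 ≤ i) :
    (pim n i : W ⊗[F] (Fin n → F) →ₗ[F] W) ∘ₗ (σ.tprod U) g
      = σ g ∘ₗ pim n i + σ g ∘ₗ pim n (i+1) := by
  by_cases hin : i < n
  · apply TensorProduct.ext'
    intro w v
    have h : 0 ≤ i ∧ i < n := ⟨hi, hin⟩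
    simp only [LinearMap.comp_apply, LinearMap.add_apply, Representation.tprod_apply,
      TensorProduct.map_tmul]
    rw [pim_apply h, hUg, Matrix.toLin'_apply, jmul, add_smul, pim_apply h, map_smul]
    congr 1
    by_cases h2 : i + 1 < n
    · rw [pim_apply ⟨by omega, h2⟩, map_smul, dif_pos (show i.toNat + 1 < n by omega)]
      have e : (⟨(i+1).toNat, by omega⟩ : Fin n) = ⟨i.toNat + 1, by omega⟩ := by
        apply Fin.ext
        show (i+1).toNat = i.toNat + 1
        omega
      rw [e]
    · rw [pim_out (show ¬ (0 ≤ i+1 ∧ i+1 < (n:ℤ)) by omega),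
        dif_neg (show ¬ (i.toNat + 1 < n) by omega)]
      simp
  · rw [pim_out (show ¬ (0 ≤ i ∧ i < (n:ℤ)) by omega),
      pim_out (show ¬ (0 ≤ i+1 ∧ i+1 < (n:ℤ)) by omega)]
    simp

lemma iom_comm_g (g : J) (hUg : U g = Matrix.toLin' (jordanMatrix F n)) (j : ℤ) (hj : j < n) :
    (σ.tprod U) g ∘ₗ (iom n j : W →ₗ[F] W ⊗[F] (Fin n → F))
      = iom n j ∘ₗ σ g + iom n (j-1) ∘ₗ σ g := by
  by_cases hj0 : 0 ≤ j
  · ext w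
    have h : 0 ≤ j ∧ j < n := ⟨hj0, hj⟩
    simp only [LinearMap.comp_apply, LinearMap.add_apply, Representation.tprod_apply]
    rw [iom_apply h, TensorProduct.map_tmul, iom_apply h, hUg, Matrix.toLin'_apply,
      Matrix.mulVec_single]
    have hcol : (fun i => jordanMatrix F n i (⟨j.toNat, by omega⟩ : Fin n) * 1)
        = (fun i => jordanMatrix F n i (⟨j.toNat, by omega⟩ : Fin n)) := by
      funext i; rw [mul_one]
    rw [show MulOpposite.op (1:F) • (jordanMatrix F n).col (⟨j.toNat, by omega⟩ : Fin n)
        = fun i => jordanMatrix F n i (⟨j.toNat, by omega⟩ : Fin n) from by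
          funext i; simp [Matrix.col], jcol]
    by_cases h1 : 1 ≤ j.toNat
    · rw [dif_pos h1, TensorProduct.tmul_add, iom_apply ⟨by omega, by omega⟩]
      have e : (⟨(j-1).toNat, by omega⟩ : Fin n) = ⟨j.toNat - 1, by omega⟩ := by
        apply Fin.ext
        show (j-1).toNat = j.toNat - 1
        omega
      rw [e]
    · rw [dif_neg h1, TensorProduct.tmul_add, TensorProduct.tmul_zero,
        iom_out (show ¬ (0 ≤ j-1 ∧ j-1 < (n:ℤ)) by omega)]
      simp
  · rw [iom_out (show ¬ (0 ≤ j ∧ j < (n:ℤ)) by omega),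
      iom_out (show ¬ (0 ≤ j-1 ∧ j-1 < (n:ℤ)) by omega)]
    simp

lemma pim_comm_triv (x : J) (hUx : U x = 1) (i : ℤ) :
    (pim n i : W ⊗[F] (Fin n → F) →ₗ[F] W) ∘ₗ (σ.tprod U) x = σ x ∘ₗ pim n i := by
  by_cases h : 0 ≤ i ∧ i < (n:ℤ)
  · apply TensorProduct.ext'
    intro w v
    simp only [LinearMap.comp_apply, Representation.tprod_apply, TensorProduct.map_tmul, hUx]
    rw [Module.End.one_apply, pim_apply h, pim_apply h, map_smul]
  · rw [pim_out h]
    simp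

lemma iom_comm_triv (x : J) (hUx : U x = 1) (j : ℤ) :
    (σ.tprod U) x ∘ₗ (iom n j : W →ₗ[F] W ⊗[F] (Fin n → F)) = iom n j ∘ₗ σ x := by
  by_cases h : 0 ≤ j ∧ j < (n:ℤ)
  · ext w
    simp only [LinearMap.comp_apply, Representation.tprod_apply]
    rw [iom_apply h, iom_apply h, TensorProduct.map_tmul, hUx, Module.End.one_apply]
  · rw [iom_out h]
    simp

end Equivariance

section Core

variable {F : Type*} [Field F] {W : Type*} [AddCommGroup W] [Module F W]
  {J : Type*} [Group J] {n : ℕ}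

/-- matrix entry of an endomorphism of `W ⊗ F^n`. -/
noncomputable def ent (n : ℕ) (φ : Module.End F (W ⊗[F] (Fin n → F))) (i j : ℤ) :
    Module.End F W :=
  pim n i ∘ₗ φ ∘ₗ iom n j

lemma ent_apply (φ : Module.End F (W ⊗[F] (Fin n → F))) (i j : ℤ) (w : W) :
    ent n φ i j w = pim n i (φ (iom n j w)) := rfl

lemma ent_out_left {φ : Module.End F (W ⊗[F] (Fin n → F))} {i j : ℤ}
    (h : ¬ (0 ≤ i ∧ i < n)) : ent n φ i j = 0 := by
  rw [ent, pim_out h]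
  simp

lemma ent_out_right {φ : Module.End F (W ⊗[F] (Fin n → F))} {i j : ℤ}
    (h : ¬ (0 ≤ j ∧ j < n)) : ent n φ i j = 0 := by
  rw [ent, iom_out h]
  simp

lemma schur [IsAlgClosed F] [FiniteDimensional F W]
    (σ : Representation F J W) (hirr : IsIrreducibleRep σ)
    (P : Subgroup J) (g : J) (hgen : Subgroup.closure ((P : Set J) ∪ {g}) = ⊤)
    (A : Module.End F W) (hg : A * σ g = σ g * A) (hP : ∀ p ∈ P, A * σ p = σ p * A) :
    ∃ c : F, A = c • (1 : Module.End F W) := by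
  haveI : Nontrivial W := hirr.1
  have hall : ∀ x : J, A * σ x = σ x * A := by
    let S : Subgroup J :=
      { carrier := {x | A * σ x = σ x * A}
        one_mem' := by simp [Set.mem_setOf_eq]
        mul_mem' := by
          intro a b ha hb
          simp only [Set.mem_setOf_eq] at *
          rw [map_mul, ← mul_assoc, ha, mul_assoc, hb, mul_assoc]
        inv_mem' := by
          intro a ha
          simp only [Set.mem_setOf_eq] at *
          have h1 : σ a * σ a⁻¹ = 1 := by rw [← map_mul, mul_inv_cancel, map_one]
          have h2 : σ a⁻¹ * σ a = 1 := by rw [← map_mul, inv_mul_cancel, map_one]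
          have key : σ a * (A * σ a⁻¹) = A := by
            rw [← mul_assoc, ← ha, mul_assoc, h1, mul_one]
          calc A * σ a⁻¹ = σ a⁻¹ * σ a * (A * σ a⁻¹) := by rw [h2, one_mul]
            _ = σ a⁻¹ * (σ a * (A * σ a⁻¹)) := by rw [mul_assoc]
            _ = σ a⁻¹ * A := by rw [key] }
    intro x
    have hle : Subgroup.closure ((P : Set J) ∪ {g}) ≤ S := by
      rw [Subgroup.closure_le]
      rintro y (hy | hy)
      · exact hP y hy
      · simp only [Set.mem_singleton_iff] at hy
        subst hy
        exact hg
    exact hle (hgen ▸ Subgroup.mem_top x)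
  obtain ⟨c, hc⟩ := Module.End.exists_eigenvalue A
  refine ⟨c, ?_⟩
  have hinv : IsInvariantSubspace σ (A.eigenspace c) := by
    intro x v hv
    rw [Module.End.mem_eigenspace_iff] at hv ⊢
    have h := LinearMap.congr_fun (hall x) v
    simp only [Module.End.mul_apply] at h
    rw [h, hv, map_smul]
  rcases hirr.2 _ hinv with hbot | htop
  · exact absurd hbot (Module.End.hasEigenvalue_iff.mp hc)
  · ext v
    have hv : v ∈ A.eigenspace c := htop ▸ Submodule.mem_top
    rw [Module.End.mem_eigenspace_iff] at hv
    simpa using hv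

end Core

section Entries

variable {F : Type*} [Field F] {W : Type*} [AddCommGroup W] [Module F W]
  {J : Type*} [Group J] {n : ℕ}

lemma entries [IsAlgClosed F] [CharZero F] [FiniteDimensional F W]
    (σ : Representation F J W) (U : Representation F J (Fin n → F))
    (P : Subgroup J) (g : J)
    (hgen : Subgroup.closure ((P : Set J) ∪ {g}) = ⊤)
    (hirr : IsIrreducibleRep σ)
    (hUP : ∀ p ∈ P, U p = 1) (hUg : U g = Matrix.toLin' (jordanMatrix F n))
    (hn : 0 < n)
    (φ : Module.End F (W ⊗[F] (Fin n → F)))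
    (hφ : ∀ x : J, φ * (σ.tprod U) x = (σ.tprod U) x * φ) :
    ∃ c : F, ∀ i j : ℤ, 0 ≤ j → i < n → j ≤ i →
      ent n φ i j = if i = j then c • (1 : Module.End F W) else 0 := by
  haveI : Nontrivial W := hirr.1
  have hφ' : ∀ (x : J) (v : W ⊗[F] (Fin n → F)), φ ((σ.tprod U) x v) = (σ.tprod U) x (φ v) := by
    intro x v
    have := LinearMap.congr_fun (hφ x) v
    simpa using this
  -- commutation with P
  have hCP : ∀ (i j : ℤ), ∀ p ∈ P, ent n φ i j * σ p = σ p * ent n φ i j := by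
    intro i j p hp
    ext w
    simp only [Module.End.mul_apply, ent_apply]
    have h1 := LinearMap.congr_fun (iom_comm_triv σ U p (hUP p hp) j) w
    simp only [LinearMap.comp_apply] at h1
    have h2 := LinearMap.congr_fun (pim_comm_triv σ U p (hUP p hp) i) (φ (iom n j w))
    simp only [LinearMap.comp_apply] at h2
    rw [← h1, hφ' p, h2]
  -- master relation
  have hMR : ∀ i j : ℤ, 0 ≤ i → j < n →
      (ent n φ i j + ent n φ i (j-1)) * σ g = σ g * (ent n φ i j + ent n φ (i+1) j) := by
    intro i j hi hj
    ext w
    simp only [Module.End.mul_apply, LinearMap.add_apply, ent_apply, map_add]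
    have h1 := LinearMap.congr_fun (iom_comm_g σ U g hUg j hj) w
    simp only [LinearMap.comp_apply, LinearMap.add_apply] at h1
    have h3 := LinearMap.congr_fun (pim_comm_g σ U g hUg i hi) (φ (iom n j w))
    simp only [LinearMap.comp_apply, LinearMap.add_apply] at h3
    calc pim n i (φ (iom n j (σ g w))) + pim n i (φ (iom n (j-1) (σ g w)))
        = pim n i (φ (iom n j (σ g w) + iom n (j-1) (σ g w))) := by rw [map_add, map_add]
      _ = pim n i (φ ((σ.tprod U) g (iom n j w))) := by rw [← h1]
      _ = pim n i ((σ.tprod U) g (φ (iom n j w))) := by rw [hφ' g]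
      _ = σ g (pim n i (φ (iom n j w))) + σ g (pim n (i+1) (φ (iom n j w))) := h3
  -- trace relation
  have hTR : ∀ i j : ℤ, 0 ≤ i → j < n →
      LinearMap.trace F W (ent n φ i (j-1)) = LinearMap.trace F W (ent n φ (i+1) j) := by
    intro i j hi hj
    have h1 : σ g * σ g⁻¹ = 1 := by rw [← map_mul, mul_inv_cancel, map_one]
    have h2 : σ g⁻¹ * σ g = 1 := by rw [← map_mul, inv_mul_cancel, map_one]
    have e1 : ent n φ i j + ent n φ i (j-1)
        = σ g * (ent n φ i j + ent n φ (i+1) j) * σ g⁻¹ := by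
      rw [← hMR i j hi hj, mul_assoc, h1, mul_one]
    have tconj : ∀ X : Module.End F W,
        LinearMap.trace F W (σ g * X * σ g⁻¹) = LinearMap.trace F W X := by
      intro X
      rw [LinearMap.trace_mul_comm, ← mul_assoc, h2, one_mul]
    have := congrArg (LinearMap.trace F W) e1
    rw [map_add, tconj, map_add] at this
    exact add_left_cancel this
  -- trace chain
  have htr_down : ∀ (m : ℕ) (i j : ℤ), 0 ≤ i - m → j < n →
      LinearMap.trace F W (ent n φ i j) = LinearMap.trace F W (ent n φ (i - m) (j - m)) := by
    intro m
    induction m with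
    | zero => intro i j _ _; norm_num
    | succ m ih =>
      intro i j hi hj
      rw [ih i j (by push_cast at hi ⊢; omega) hj]
      have h := hTR (i - m - 1) (j - m) (by push_cast at hi ⊢; omega) (by omega)
      rw [show i - (m:ℤ) - 1 + 1 = i - m from by ring,
        show j - (m:ℤ) - 1 = j - m - 1 from by ring] at h
      rw [show i - ((m+1 : ℕ):ℤ) = i - m - 1 from by push_cast; ring,
        show j - ((m+1 : ℕ):ℤ) = j - m - 1 from by push_cast; ring]
      exact h.symm
  have hD : (Module.finrank F W : F) ≠ 0 := Nat.cast_ne_zero.mpr Module.finrank_pos.ne'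
  -- strictly subdiagonal entries vanish
  have hz : ∀ k : ℕ, ∀ i j : ℤ, 0 ≤ j → i < n → 1 ≤ i - j → i - j = (n:ℤ) - 1 - k →
      ent n φ i j = 0 := by
    intro k
    induction k using Nat.strong_induction_on with
    | _ k ih =>
      intro i j hj hi h1 hk
      have hi0 : (0:ℤ) ≤ i := by omega
      have hjn : j < (n:ℤ) := by omega
      have hA : ent n φ (i+1) j = 0 := by
        by_cases h : i + 1 < (n:ℤ)
        · have hk1 : 1 ≤ k := by omega
          exact ih (k-1) (by omega) (i+1) j hj h (by omega) (by push_cast; omega)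
        · exact ent_out_left (by omega)
      have hB : ent n φ i (j-1) = 0 := by
        by_cases h : (0:ℤ) ≤ j - 1
        · have hk1 : 1 ≤ k := by omega
          exact ih (k-1) (by omega) i (j-1) h hi (by omega) (by push_cast; omega)
        · exact ent_out_right (by omega)
      have hmr := hMR i j hi0 hjn
      rw [hA, hB, add_zero] at hmr
      obtain ⟨c, hc⟩ := schur σ hirr P g hgen (ent n φ i j) hmr (fun p hp => hCP i j p hp)
      have ht0 : LinearMap.trace F W (ent n φ i j) = 0 := by
        rw [htr_down (j.toNat + 1) i j (by push_cast; omega) hjn,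
          ent_out_right (show ¬ ((0:ℤ) ≤ j - ((j.toNat + 1 : ℕ):ℤ) ∧ j - ((j.toNat + 1 : ℕ):ℤ) < n) from by push_cast; omega),
          map_zero]
      rw [hc, map_smul, LinearMap.trace_one, smul_eq_mul] at ht0
      rcases mul_eq_zero.mp ht0 with h | h
      · rw [hc, h, zero_smul]
      · exact absurd h hD
  -- diagonal entries are scalars
  have hdiag : ∀ i : ℤ, 0 ≤ i → i < n → ∃ c : F, ent n φ i i = c • (1 : Module.End F W) := by
    intro i h0 hi
    have hA : ent n φ (i+1) i = 0 := by
      by_cases h : i + 1 < (n:ℤ)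
      · exact hz (n-2) (i+1) i h0 h (by omega) (by omega)
      · exact ent_out_left (by omega)
    have hB : ent n φ i (i-1) = 0 := by
      by_cases h : (0:ℤ) ≤ i - 1
      · exact hz (n-2) i (i-1) h hi (by omega) (by omega)
      · exact ent_out_right (by omega)
    have hmr := hMR i i h0 hi
    rw [hA, hB, add_zero] at hmr
    exact schur σ hirr P g hgen _ hmr (fun p hp => hCP i i p hp)
  obtain ⟨c0, hc0⟩ := hdiag 0 le_rfl (by exact_mod_cast hn)
  refine ⟨c0, ?_⟩
  intro i j hj hi hji
  by_cases hij : i = j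
  · subst hij
    rw [if_pos rfl]
    obtain ⟨c, hc⟩ := hdiag i hj hi
    have htr := htr_down i.toNat i i (by omega) hi
    rw [show i - (i.toNat : ℤ) = 0 from by omega] at htr
    rw [hc, hc0, map_smul, map_smul, LinearMap.trace_one, smul_eq_mul, smul_eq_mul] at htr
    have : c = c0 := mul_right_cancel₀ hD htr
    rw [hc, this]
  · rw [if_neg hij]
    exact hz ((n:ℤ) - 1 - (i-j)).toNat i j hj hi (by omega) (by omega)

end Entries

section Zero

variable {F : Type*} [Field F] {W : Type*} [AddCommGroup W] [Module F W] {n : ℕ}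

lemma ent_mul (φ ψ : Module.End F (W ⊗[F] (Fin n → F))) (i j : ℤ) :
    ent n (φ * ψ) i j = ∑ k ∈ Finset.range n, ent n φ i (k:ℤ) * ent n ψ (k:ℤ) j := by
  ext w
  have hid := LinearMap.congr_fun (sum_iom_pim (F := F) (W := W) (n := n)) (ψ (iom n j w))
  simp only [LinearMap.sum_apply, LinearMap.comp_apply, LinearMap.id_apply] at hid
  calc ent n (φ * ψ) i j w = pim n i (φ (ψ (iom n j w))) := by
        simp only [ent_apply, Module.End.mul_apply]
    _ = pim n i (φ (∑ k ∈ Finset.range n, iom n (k:ℤ) (pim n (k:ℤ) (ψ (iom n j w))))) := by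
        rw [hid]
    _ = ∑ k ∈ Finset.range n, pim n i (φ (iom n (k:ℤ) (pim n (k:ℤ) (ψ (iom n j w))))) := by
        simp only [map_sum]
    _ = (∑ k ∈ Finset.range n, ent n φ i (k:ℤ) * ent n ψ (k:ℤ) j) w := by
        rw [LinearMap.sum_apply]
        exact Finset.sum_congr rfl (fun k _ => rfl)

lemma entzero (φ : Module.End F (W ⊗[F] (Fin n → F))) (hidem : φ * φ = φ)
    (h0 : ∀ i j : ℤ, 0 ≤ j → i < n → j ≤ i → ent n φ i j = 0) : φ = 0 := by
  have hup : ∀ d : ℕ, ∀ i j : ℤ, j = i + d → ent n φ i j = 0 := by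
    intro d
    induction d using Nat.strong_induction_on with
    | _ d ih =>
      intro i j hd
      by_cases hri : 0 ≤ i ∧ i < (n:ℤ)
      · by_cases hrj : 0 ≤ j ∧ j < (n:ℤ)
        · by_cases hd0 : d = 0
          · exact h0 i j hrj.1 hri.2 (by omega)
          · have h : ent n φ i j = ent n (φ * φ) i j := by rw [hidem]
            rw [h, ent_mul]
            apply Finset.sum_eq_zero
            intro k hk
            have hkn : k < n := Finset.mem_range.mp hk
            by_cases h1 : (k:ℤ) ≤ i
            · rw [h0 i (k:ℤ) (by omega) hri.2 h1, zero_mul]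
            · by_cases h2 : j ≤ (k:ℤ)
              · rw [h0 (k:ℤ) j hrj.1 (by omega) h2, mul_zero]
              · rw [ih ((k:ℤ) - i).toNat (by omega) i (k:ℤ) (by omega), zero_mul]
        · exact ent_out_right hrj
      · exact ent_out_left hri
  have hall : ∀ i j : ℤ, ent n φ i j = 0 := by
    intro i j
    by_cases hri : 0 ≤ i ∧ i < (n:ℤ)
    · by_cases hrj : 0 ≤ j ∧ j < (n:ℤ)
      · by_cases hji : j ≤ i
        · exact h0 i j hrj.1 hri.2 hji
        · exact hup (j - i).toNat i j (by omega)
      · exact ent_out_right hrj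
    · exact ent_out_left hri
  apply LinearMap.ext
  intro v
  show φ v = 0
  have hid := LinearMap.congr_fun (sum_iom_pim (F := F) (W := W) (n := n)) v
  simp only [LinearMap.sum_apply, LinearMap.comp_apply, LinearMap.id_apply] at hid
  have step : ∀ k : ℕ, φ (iom n (k:ℤ) (pim n (k:ℤ) v)) = 0 := by
    intro k
    have hid2 := LinearMap.congr_fun (sum_iom_pim (F := F) (W := W) (n := n))
      (φ (iom n (k:ℤ) (pim n (k:ℤ) v)))
    simp only [LinearMap.sum_apply, LinearMap.comp_apply, LinearMap.id_apply] at hid2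
    rw [← hid2]
    apply Finset.sum_eq_zero
    intro m _
    have h : pim n (m:ℤ) (φ (iom n (k:ℤ) (pim n (k:ℤ) v)))
        = ent n φ (m:ℤ) (k:ℤ) (pim n (k:ℤ) v) := rfl
    rw [h, hall, LinearMap.zero_apply, map_zero]
  calc φ v = φ (∑ k ∈ Finset.range n, iom n (k:ℤ) (pim n (k:ℤ) v)) := by rw [hid]
    _ = ∑ k ∈ Finset.range n, φ (iom n (k:ℤ) (pim n (k:ℤ) v)) := by rw [map_sum]
    _ = 0 := by rw [Finset.sum_congr rfl (fun k _ => step k), Finset.sum_const_zero]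

end Zero

end JordanAux


/-- Lemma 2.2(iii): let `F` be an algebraically closed field of characteristic `0`, `J` a
group, `P` a normal subgroup, and `g ∈ J` such that `J` is generated by `P` and `g` and
`J/P` is infinite cyclic generated by the image of `g`. If `W` is a finite-dimensional
irreducible representation of `J` over `F` on which `P` has finite image, then for every
positive integer `n` and every representation `U` of type `U(n)`, the representation
`W ⊗ U(n)` is indecomposable. -/
theorem isIndecomposable_tprod_jordan
    {F : Type*} [Field F] [IsAlgClosed F] [CharZero F]
    {J : Type*} [Group J] (P : Subgroup J) [P.Normal] (g : J)
    (hgen : Subgroup.closure ((P : Set J) ∪ {g}) = ⊤)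
    (hfree : ∀ m : ℤ, g ^ m ∈ P → m = 0)
    {W : Type*} [AddCommGroup W] [Module F W] [FiniteDimensional F W]
    (σ : Representation F J W)
    (hirr : IsIrreducibleRep σ)
    (hPfin : (Set.range fun x : P => σ (x : J)).Finite)
    (n : ℕ) (hn : 0 < n)
    (U : Representation F J (Fin n → F)) (hU : IsUnipotentJordanRep P g n U) :
    IsIndecomposableRep (σ.tprod U) := by
  classical
  obtain ⟨hUP, hUg⟩ := hU
  haveI hW : Nontrivial W := hirr.1
  obtain ⟨w0, hw0⟩ := exists_ne (0 : W)
  have hn' : (0:ℤ) < (n:ℤ) := by exact_mod_cast hn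
  have hpi0 : ∀ w : W, JordanAux.pim (F := F) n 0 (JordanAux.iom (F := F) n 0 w) = w := by
    intro w
    have h := LinearMap.congr_fun (JordanAux.pim_comp_iom (F := F) (W := W)
      (i := 0) (j := 0) ⟨le_rfl, hn'⟩ ⟨le_rfl, hn'⟩) w
    simpa using h
  have hscal : ∀ a b : F, a • (1 : Module.End F W) = b • (1 : Module.End F W) → a = b := by
    intro a b hab
    have h := LinearMap.congr_fun hab w0
    simp only [LinearMap.smul_apply, Module.End.one_apply] at h
    have h2 : (a - b) • w0 = 0 := by rw [sub_smul, h, sub_self]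
    rcases smul_eq_zero.mp h2 with h3 | h3
    · exact sub_eq_zero.mp h3
    · exact absurd h3 hw0
  constructor
  · refine ⟨JordanAux.iom (F := F) n 0 w0, 0, fun hcon => hw0 ?_⟩
    have h := hpi0 w0
    rw [hcon, map_zero] at h
    exact h.symm
  · intro p q hp hq hcompl
    set pr := p.linearProjOfIsCompl q hcompl with hpr
    set φ : Module.End F (W ⊗[F] (Fin n → F)) := p.subtype ∘ₗ pr with hφdef
    have hφmem : ∀ v, φ v ∈ p := fun v => (pr v).2
    have hleft : ∀ v ∈ p, φ v = v := by
      intro v hv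
      exact congrArg Subtype.val (Submodule.linearProjOfIsCompl_apply_left hcompl (⟨v, hv⟩ : p))
    have hright : ∀ v ∈ q, φ v = 0 := by
      intro v hv
      exact congrArg Subtype.val (Submodule.linearProjOfIsCompl_apply_right hcompl (⟨v, hv⟩ : q))
    have hidem : φ * φ = φ := by
      apply LinearMap.ext
      intro v
      simp only [Module.End.mul_apply]
      exact hleft (φ v) (hφmem v)
    have hequiv : ∀ x : J, φ * (σ.tprod U) x = (σ.tprod U) x * φ := by
      intro x
      apply LinearMap.ext
      intro v
      obtain ⟨a, ha, b, hb, hab⟩ := Submodule.mem_sup.mp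
        (show v ∈ p ⊔ q from hcompl.sup_eq_top ▸ Submodule.mem_top)
      simp only [Module.End.mul_apply]
      rw [← hab, map_add, map_add, map_add, hleft a ha, hright b hb,
        hleft _ (hp x a ha), hright _ (hq x b hb)]
      simp
    obtain ⟨c0, hc0⟩ := JordanAux.entries σ U P g hgen hirr hUP hUg hn φ hequiv
    have he00 : JordanAux.ent n φ 0 0 = c0 • (1 : Module.End F W) := by
      have h := hc0 0 0 le_rfl hn' le_rfl
      simpa using h
    have hsq : c0 * c0 = c0 := by
      have h1 := JordanAux.ent_mul φ φ (0:ℤ) (0:ℤ)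
      rw [hidem] at h1
      have h2 : ∀ k ∈ Finset.range n,
          JordanAux.ent n φ 0 (k:ℤ) * JordanAux.ent n φ (k:ℤ) 0
            = if k = 0 then (c0 * c0) • (1 : Module.End F W) else 0 := by
        intro k hk
        by_cases hk0 : k = 0
        · subst hk0
          rw [if_pos rfl]
          push_cast
          rw [he00, smul_mul_smul_comm, one_mul]
        · rw [if_neg hk0,
            hc0 (k:ℤ) 0 le_rfl (by exact_mod_cast Finset.mem_range.mp hk) (by positivity),
            if_neg (by omega : ¬ ((k:ℤ) = 0)), mul_zero]
      rw [Finset.sum_congr rfl h2, Finset.sum_ite_eq' (Finset.range n) 0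
        (fun _ => (c0 * c0) • (1 : Module.End F W)), if_pos (Finset.mem_range.mpr hn)] at h1
      exact (hscal _ _ (h1.symm.trans he00).symm).symm
    have hcases : c0 = 0 ∨ c0 = 1 := by
      have h : c0 * (c0 - 1) = 0 := by ring_nf; linear_combination hsq
      rcases mul_eq_zero.mp h with h1 | h1
      · exact Or.inl h1
      · exact Or.inr (sub_eq_zero.mp h1)
    rcases hcases with hc00 | hc01
    · left
      have hzero : ∀ i j : ℤ, 0 ≤ j → i < n → j ≤ i → JordanAux.ent n φ i j = 0 := by
        intro i j hj hi hji
        rw [hc0 i j hj hi hji]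
        split_ifs
        · rw [hc00, zero_smul]
        · rfl
      have hφ0 : φ = 0 := JordanAux.entzero φ hidem hzero
      rw [Submodule.eq_bot_iff]
      intro a ha
      have h := hleft a ha
      rw [hφ0] at h
      simpa using h.symm
    · right
      set ψ : Module.End F (W ⊗[F] (Fin n → F)) := 1 - φ with hψdef
      have hψidem : ψ * ψ = ψ := by
        apply LinearMap.ext
        intro v
        have h := LinearMap.congr_fun hidem v
        simp only [Module.End.mul_apply] at h
        simp only [hψdef, Module.End.mul_apply, LinearMap.sub_apply, Module.End.one_apply,
          map_sub, h]
        abel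
      have hψequiv : ∀ x : J, ψ * (σ.tprod U) x = (σ.tprod U) x * ψ := by
        intro x
        apply LinearMap.ext
        intro v
        have h := LinearMap.congr_fun (hequiv x) v
        simp only [Module.End.mul_apply] at h
        simp only [hψdef, Module.End.mul_apply, LinearMap.sub_apply, Module.End.one_apply,
          map_sub, h]
      obtain ⟨c1, hc1⟩ := JordanAux.entries σ U P g hgen hirr hUP hUg hn ψ hψequiv
      have heψ : JordanAux.ent n ψ 0 0 = 0 := by
        apply LinearMap.ext
        intro w
        have h := LinearMap.congr_fun he00 w
        simp only [JordanAux.ent_apply, LinearMap.smul_apply, Module.End.one_apply] at h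
        simp only [JordanAux.ent_apply, hψdef, LinearMap.sub_apply, Module.End.one_apply,
          map_sub, LinearMap.zero_apply]
        rw [hpi0 w, h, hc01, one_smul, sub_self]
      have hc10 : c1 = 0 := by
        have h := hc1 0 0 le_rfl hn' le_rfl
        norm_num at h
        apply hscal
        rw [← h, heψ, zero_smul]
      have hzero : ∀ i j : ℤ, 0 ≤ j → i < n → j ≤ i → JordanAux.ent n ψ i j = 0 := by
        intro i j hj hi hji
        rw [hc1 i j hj hi hji]
        split_ifs
        · rw [hc10, zero_smul]
        · rfl
      have hψ0 : ψ = 0 := JordanAux.entzero ψ hψidem hzero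
      rw [Submodule.eq_bot_iff]
      intro b hb
      have h := LinearMap.congr_fun hψ0 b
      simp only [hψdef, LinearMap.sub_apply, Module.End.one_apply, LinearMap.zero_apply] at h
      rw [hright b hb] at h
      simpa using h
end
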